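/- A regular graph Γ with D = d is distance-regular if and only if s_{d-1}(λ0) equals the harmonic mean of the (d−1)-neighborhood sizes: s_{d-1}(λ0) = n / Σ_{u∈V} |N_{d-1}(u)|^{-1}. -/

import Mathlib

open Matrix Polynomial Finset

/-- The distance-`i` matrix of a graph on `Fin n`. -/
noncomputable def distMatrix {n : ℕ} (G : SimpleGraph (Fin n)) (i : ℕ) :
    Matrix (Fin n) (Fin n) ℝ :=
  Matrix.of fun u v => if G.dist u v = i then 1 else 0

/-- The 0-1 matrix of pairs at distance at most `i` (`S_i`). -/
noncomputable def ballMatrix {n : ℕ} (G : SimpleGraph (Fin n)) (i : ℕ) :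
    Matrix (Fin n) (Fin n) ℝ :=
  Matrix.of fun u v => if G.dist u v ≤ i then 1 else 0

/-- The normalized trace inner product `⟨R,S⟩ = (1/n) tr (R S)`. -/
noncomputable def ip {n : ℕ} (R S : Matrix (Fin n) (Fin n) ℝ) : ℝ :=
  (1 / (n : ℝ)) * (R * S).trace

/-- Average crossed local multiplicity `m̄_{ij} = ⟨E_j, A_i⟩ / ‖A_i‖²`. -/
noncomputable def mbar {n : ℕ} (G : SimpleGraph (Fin n)) (E : Matrix (Fin n) (Fin n) ℝ)
    (i : ℕ) : ℝ :=
  ip E (distMatrix G i) / ip (distMatrix G i) (distMatrix G i)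

noncomputable def pip (n d : ℕ) (lam m : ℕ → ℝ) (q r : Polynomial ℝ) : ℝ :=
  (1 / (n : ℝ)) * ∑ j ∈ Finset.range (d + 1), m j * q.eval (lam j) * r.eval (lam j)

section SET
variable {n d δ : ℕ} {G : SimpleGraph (Fin n)} [DecidableRel G.Adj]
variable {lam m : ℕ → ℝ} {E : ℕ → Matrix (Fin n) (Fin n) ℝ} {p : ℕ → Polynomial ℝ}

private lemma powA
    (hEmul : ∀ j ≤ d, ∀ k ≤ d, E j * E k = if j = k then E j else 0)
    (hEsum : ∑ j ∈ Finset.range (d + 1), E j = 1)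
    (hAE : G.adjMatrix ℝ = ∑ j ∈ Finset.range (d + 1), lam j • E j) :
    ∀ i : ℕ, (G.adjMatrix ℝ) ^ i = ∑ j ∈ Finset.range (d + 1), (lam j) ^ i • E j := by
  intro i
  induction i with
  | zero => simpa using hEsum.symm
  | succ i ih =>
    rw [pow_succ, ih, hAE, Finset.sum_mul_sum]
    refine Finset.sum_congr rfl fun j hj => ?_
    have hj' : j ≤ d := by have := Finset.mem_range.mp hj; omega
    have step : ∀ k ∈ Finset.range (d+1),
        (lam j ^ i • E j) * (lam k • E k)
          = if j = k then (lam j ^ i * lam k) • E k else 0 := by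
      intro k hk
      have hk' : k ≤ d := by have := Finset.mem_range.mp hk; omega
      rw [Matrix.smul_mul, Matrix.mul_smul, hEmul j hj' k hk', smul_smul]
      split
      · subst ‹j = k›; rfl
      · simp
    rw [Finset.sum_congr rfl step, Finset.sum_ite_eq (Finset.range (d+1)) j
      (fun k => (lam j ^ i * lam k) • E k), if_pos hj, pow_succ]

private lemma aevalA
    (hEmul : ∀ j ≤ d, ∀ k ≤ d, E j * E k = if j = k then E j else 0)
    (hEsum : ∑ j ∈ Finset.range (d + 1), E j = 1)
    (hAE : G.adjMatrix ℝ = ∑ j ∈ Finset.range (d + 1), lam j • E j)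
    (q : Polynomial ℝ) :
    Polynomial.aeval (G.adjMatrix ℝ) q
      = ∑ j ∈ Finset.range (d + 1), q.eval (lam j) • E j := by
  rw [Polynomial.aeval_eq_sum_range]
  simp_rw [powA hEmul hEsum hAE, Finset.smul_sum, smul_smul]
  rw [Finset.sum_comm]
  refine Finset.sum_congr rfl fun j hj => ?_
  rw [← Finset.sum_smul, Polynomial.eval_eq_sum_range]

private lemma aeval_mulVec_one (hreg : G.IsRegularOfDegree δ) (q : Polynomial ℝ) :
    (Polynomial.aeval (G.adjMatrix ℝ) q) *ᵥ (Function.const _ (1:ℝ))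
      = Function.const _ (q.eval (δ:ℝ)) := by
  have hpow : ∀ i : ℕ, (G.adjMatrix ℝ) ^ i *ᵥ (Function.const _ (1:ℝ))
      = Function.const _ ((δ:ℝ) ^ i) := by
    intro i
    induction i with
    | zero => simp [Matrix.one_mulVec]
    | succ i ih =>
      rw [pow_succ', ← Matrix.mulVec_mulVec, ih]
      funext u
      rw [SimpleGraph.adjMatrix_mulVec_const_apply_of_regular hreg]
      simp [Function.const, pow_succ']
  have key : ∀ (s : Finset ℕ) (c : ℕ → ℝ),
      (∑ i ∈ s, c i • (G.adjMatrix ℝ) ^ i) *ᵥ (Function.const _ (1:ℝ))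
        = Function.const _ (∑ i ∈ s, c i * (δ:ℝ) ^ i) := by
    intro s c
    induction s using Finset.induction with
    | empty => simp [Matrix.zero_mulVec]
    | insert _ _ hx ih =>
      rw [Finset.sum_insert hx, Finset.sum_insert hx, Matrix.add_mulVec, ih,
        Matrix.smul_mulVec, hpow]
      funext u; simp [Function.const]
  rw [Polynomial.aeval_eq_sum_range, key]
  funext u
  rw [Polynomial.eval_eq_sum_range]

private lemma aeval_rowsum (hreg : G.IsRegularOfDegree δ) (q : Polynomial ℝ) (u : Fin n) :
    ∑ v, (Polynomial.aeval (G.adjMatrix ℝ) q) u v = q.eval (δ:ℝ) := by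
  have := congrFun (aeval_mulVec_one hreg q) u
  simpa [Matrix.mulVec, dotProduct, Function.const] using this

private lemma aeval_symm (q : Polynomial ℝ) :
    (Polynomial.aeval (G.adjMatrix ℝ) q)ᵀ = Polynomial.aeval (G.adjMatrix ℝ) q := by
  rw [Polynomial.aeval_eq_sum_range, Matrix.transpose_sum]
  refine Finset.sum_congr rfl fun i _ => ?_
  rw [Matrix.transpose_smul, Matrix.transpose_pow, SimpleGraph.transpose_adjMatrix]

private lemma perron (hconn : G.Connected) (hreg : G.IsRegularOfDegree δ)
    (v : Fin n → ℝ) (hv : (G.adjMatrix ℝ) *ᵥ v = (δ:ℝ) • v) : ∀ u w, v u = v w := by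
  have hne : (Finset.univ : Finset (Fin n)).Nonempty := by
    have : Nonempty (Fin n) := hconn.nonempty
    exact Finset.univ_nonempty
  obtain ⟨u0, -, hmax⟩ := Finset.exists_max_image Finset.univ v hne
  have step : ∀ x, v x = v u0 → ∀ z, G.Adj x z → v z = v u0 := by
    intro x hx z hz
    have hrow : ∑ w ∈ G.neighborFinset x, v w = (δ:ℝ) * v u0 := by
      have := congrFun hv x
      rw [SimpleGraph.adjMatrix_mulVec_apply] at this
      rw [this]; simp [hx]
    have hconst : ∑ w ∈ G.neighborFinset x, v u0 = (δ:ℝ) * v u0 := by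
      rw [Finset.sum_const, SimpleGraph.card_neighborFinset_eq_degree, hreg x, nsmul_eq_mul]
    have heach := (Finset.sum_eq_sum_iff_of_le
      (fun w _ => hmax w (Finset.mem_univ w))).mp (hrow.trans hconst.symm)
    exact heach z (by rwa [SimpleGraph.mem_neighborFinset])
  have walk : ∀ x y (W : G.Walk x y), v x = v u0 → v y = v u0 := by
    intro x y W
    induction W with
    | nil => exact id
    | cons h W ih => intro hx; exact ih (step _ hx _ h)
  intro u w
  obtain ⟨Wu⟩ := hconn.preconnected u0 u
  obtain ⟨Ww⟩ := hconn.preconnected u0 w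
  rw [walk _ _ Wu rfl, walk _ _ Ww rfl]

private lemma ip_aeval
    (hEmul : ∀ j ≤ d, ∀ k ≤ d, E j * E k = if j = k then E j else 0)
    (hEsum : ∑ j ∈ Finset.range (d + 1), E j = 1)
    (hAE : G.adjMatrix ℝ = ∑ j ∈ Finset.range (d + 1), lam j • E j)
    (htr : ∀ j ≤ d, (E j).trace = m j)
    (q r : Polynomial ℝ) :
    ip (Polynomial.aeval (G.adjMatrix ℝ) q) (Polynomial.aeval (G.adjMatrix ℝ) r)
      = pip n d lam m q r := by
  unfold ip pip
  rw [aevalA hEmul hEsum hAE, aevalA hEmul hEsum hAE, Finset.sum_mul_sum]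
  congr 1
  rw [Matrix.trace_sum]
  refine Finset.sum_congr rfl fun j hj => ?_
  have hj' : j ≤ d := by have := Finset.mem_range.mp hj; omega
  rw [Matrix.trace_sum]
  have step : ∀ k ∈ Finset.range (d+1),
      ((q.eval (lam j) • E j) * (r.eval (lam k) • E k)).trace
        = if j = k then m k * q.eval (lam k) * r.eval (lam k) else 0 := by
    intro k hk
    have hk' : k ≤ d := by have := Finset.mem_range.mp hk; omega
    rw [Matrix.smul_mul, Matrix.mul_smul, hEmul j hj' k hk']
    split
    · subst ‹j = k›
      rw [Matrix.trace_smul, Matrix.trace_smul, htr j hj', smul_eq_mul, smul_eq_mul]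
      ring
    · simp
  rw [Finset.sum_congr rfl step, Finset.sum_ite_eq (Finset.range (d+1)) j
    (fun k => m k * q.eval (lam k) * r.eval (lam k)), if_pos hj]

private lemma pip_comm (q r : Polynomial ℝ) :
    pip n d lam m q r = pip n d lam m r q := by
  unfold pip; congr 1; refine Finset.sum_congr rfl fun j _ => ?_; ring

private lemma pip_X (q r : Polynomial ℝ) :
    pip n d lam m (Polynomial.X * q) r = pip n d lam m q (Polynomial.X * r) := by
  unfold pip; congr 1; refine Finset.sum_congr rfl fun j _ => ?_
  simp only [Polynomial.eval_mul, Polynomial.eval_X]; ring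

private lemma pip_sum_left (s : Finset ℕ) (c : ℕ → ℝ) (f : ℕ → Polynomial ℝ)
    (r : Polynomial ℝ) :
    pip n d lam m (∑ k ∈ s, c k • f k) r = ∑ k ∈ s, c k * pip n d lam m (f k) r := by
  simp only [pip, Polynomial.eval_finset_sum, Polynomial.eval_smul, smul_eq_mul,
    Finset.sum_mul, Finset.mul_sum]
  rw [Finset.sum_comm]
  refine Finset.sum_congr rfl fun k _ => ?_
  refine Finset.sum_congr rfl fun j _ => ?_
  ring

private lemma pip_nonneg (hm : ∀ j ≤ d, 0 < m j) (q : Polynomial ℝ) :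
    0 ≤ pip n d lam m q q := by
  unfold pip
  apply mul_nonneg (by positivity)
  apply Finset.sum_nonneg
  intro j hj
  have := (hm j (by have := Finset.mem_range.mp hj; omega)).le
  rw [mul_assoc]
  exact mul_nonneg this (mul_self_nonneg _)

private lemma pip_self_pos (hn : 0 < n) (hlam : StrictAntiOn lam (Set.Iic d))
    (hm : ∀ j ≤ d, 0 < m j) (q : Polynomial ℝ) (hq : q.natDegree ≤ d) (hq0 : q ≠ 0) :
    0 < pip n d lam m q q := by
  rcases (pip_nonneg hm q).lt_or_eq with h | h
  · exact h
  exfalso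
  have hz : ∀ j ≤ d, q.eval (lam j) = 0 := by
    have hsum : ∑ j ∈ Finset.range (d + 1), m j * q.eval (lam j) * q.eval (lam j) = 0 := by
      have hS := h.symm
      unfold pip at hS
      rcases mul_eq_zero.mp hS with h' | h'
      · exact absurd h' (by positivity)
      · exact h' 
    intro j hjd
    have hmem : j ∈ Finset.range (d+1) := Finset.mem_range.mpr (by omega)
    have := (Finset.sum_eq_zero_iff_of_nonneg (fun k hk => by
      have hk' : k ≤ d := by have := Finset.mem_range.mp hk; omega
      rw [mul_assoc]
      exact mul_nonneg (hm k hk').le (mul_self_nonneg _))).mp hsum j hmem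
    have hmj := (hm j hjd).ne'
    rcases mul_eq_zero.mp this with h' | h'
    · rcases mul_eq_zero.mp h' with h'' | h''
      · exact absurd h'' hmj
      · exact h''
    · exact h'
  apply hq0
  apply Polynomial.eq_zero_of_natDegree_lt_card_of_eval_eq_zero' q
    ((Finset.range (d+1)).image lam)
  · intro x hx
    obtain ⟨j, hj, rfl⟩ := Finset.mem_image.mp hx
    exact hz j (by have := Finset.mem_range.mp hj; omega)
  · rw [Finset.card_image_of_injOn, Finset.card_range]
    · omega
    · intro a ha b hb hab
      have ha' : (a:ℕ) ≤ d := by have := Finset.mem_range.mp ha; omega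
      have hb' : (b:ℕ) ≤ d := by have := Finset.mem_range.mp hb; omega
      by_contra hne
      rcases Nat.lt_or_ge a b with h' | h'
      · exact (hlam (Set.mem_Iic.mpr ha') (Set.mem_Iic.mpr hb') h').ne' hab
      · have h'' : b < a := by omega
        exact (hlam (Set.mem_Iic.mpr hb') (Set.mem_Iic.mpr ha') h'').ne' hab.symm

private lemma span_p (hpdeg : ∀ k ≤ d, (p k).natDegree = k) (hpne : ∀ k ≤ d, p k ≠ 0) :
    ∀ k, k ≤ d → ∀ q : Polynomial ℝ, q.natDegree ≤ k →
      ∃ c : ℕ → ℝ, q = ∑ j ∈ Finset.range (k+1), c j • p j := by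
  intro k
  induction k with
  | zero =>
    intro _ q hq
    refine ⟨fun _ => q.coeff 0 / (p 0).coeff 0, ?_⟩
    rw [Finset.sum_range_one]
    have h0 : (p 0).natDegree = 0 := hpdeg 0 (by omega)
    have hb : (p 0).coeff 0 ≠ 0 := by
      have := Polynomial.leadingCoeff_ne_zero.mpr (hpne 0 (by omega))
      rwa [Polynomial.leadingCoeff, h0] at this
    have hqc : q = Polynomial.C (q.coeff 0) := Polynomial.eq_C_of_natDegree_eq_zero (by omega)
    have hpc : p 0 = Polynomial.C ((p 0).coeff 0) := Polynomial.eq_C_of_natDegree_eq_zero h0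
    calc q = Polynomial.C (q.coeff 0) := hqc
      _ = (q.coeff 0 / (p 0).coeff 0) • Polynomial.C ((p 0).coeff 0) := by
          rw [Polynomial.smul_C, smul_eq_mul, div_mul_cancel₀ _ hb]
      _ = (q.coeff 0 / (p 0).coeff 0) • p 0 := by rw [← hpc]
  | succ k ih =>
    intro hk q hq
    set L := q.coeff (k+1) / (p (k+1)).coeff (k+1) with hL
    have hdeg1 : (p (k+1)).natDegree = k+1 := hpdeg (k+1) hk
    have hlead : (p (k+1)).coeff (k+1) ≠ 0 := by
      have := Polynomial.leadingCoeff_ne_zero.mpr (hpne (k+1) hk)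
      rwa [Polynomial.leadingCoeff, hdeg1] at this
    have hq' : (q - L • p (k+1)).natDegree ≤ k := by
      rw [Polynomial.natDegree_le_iff_coeff_eq_zero]
      intro N hN
      rw [Polynomial.coeff_sub, Polynomial.coeff_smul, smul_eq_mul]
      rcases Nat.lt_or_ge (k+1) N with h | h
      · rw [Polynomial.coeff_eq_zero_of_natDegree_lt (lt_of_le_of_lt hq h),
          Polynomial.coeff_eq_zero_of_natDegree_lt (by rw [hdeg1]; exact h)]
        ring
      · have hNk : N = k + 1 := by omega
        subst hNk
        rw [hL, div_mul_cancel₀ _ hlead, sub_self]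
    obtain ⟨c, hc⟩ := ih (by omega) _ hq'
    refine ⟨fun j => if j = k+1 then L else c j, ?_⟩
    rw [Finset.sum_range_succ]
    beta_reduce
    rw [if_pos rfl]
    have hagree : ∑ j ∈ Finset.range (k+1), (if j = k+1 then L else c j) • p j
        = ∑ j ∈ Finset.range (k+1), c j • p j := by
      refine Finset.sum_congr rfl fun j hj => ?_
      rw [if_neg (by have := Finset.mem_range.mp hj; omega)]
    rw [hagree, ← hc]
    ring

private lemma interp_deg (hlam : StrictAntiOn lam (Set.Iic d)) (r : Polynomial ℝ) :
    ∃ q : Polynomial ℝ, q.natDegree ≤ d ∧ ∀ j ≤ d, q.eval (lam j) = r.eval (lam j) := by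
  have hinj : Set.InjOn lam (Finset.range (d+1) : Finset ℕ) := by
    intro a ha b hb hab
    have ha' : (a:ℕ) ≤ d := by
      have := Finset.mem_range.mp (Finset.mem_coe.mp ha); omega
    have hb' : (b:ℕ) ≤ d := by
      have := Finset.mem_range.mp (Finset.mem_coe.mp hb); omega
    by_contra hne
    rcases Nat.lt_or_ge a b with h' | h'
    · exact (hlam (Set.mem_Iic.mpr ha') (Set.mem_Iic.mpr hb') h').ne' hab
    · have h'' : b < a := by omega
      exact (hlam (Set.mem_Iic.mpr hb') (Set.mem_Iic.mpr ha') h'').ne' hab.symm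
  refine ⟨Lagrange.interpolate (Finset.range (d+1)) lam (fun j => r.eval (lam j)), ?_, ?_⟩
  · have hdeg := Lagrange.degree_interpolate_lt (fun j => r.eval (lam j)) hinj
    rw [Finset.card_range] at hdeg
    by_cases h0 : Lagrange.interpolate (Finset.range (d+1)) lam (fun j => r.eval (lam j)) = 0
    · rw [h0]; simp
    · have := Polynomial.natDegree_lt_iff_degree_lt h0 |>.mpr (by exact_mod_cast hdeg)
      omega
  · intro j hj
    exact Lagrange.eval_interpolate_at_node _ hinj (Finset.mem_range.mpr (by omega))

private lemma adjpow_entry_zero (hconn : G.Connected) :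
    ∀ (i : ℕ) (u v : Fin n), i < G.dist u v → ((G.adjMatrix ℝ) ^ i) u v = 0 := by
  intro i
  induction i with
  | zero =>
    intro u v h
    have : u ≠ v := by
      rintro rfl
      simp [SimpleGraph.dist_self] at h
    rw [pow_zero]
    exact Matrix.one_apply_ne this
  | succ i ih =>
    intro u v h
    rw [pow_succ, Matrix.mul_apply]
    apply Finset.sum_eq_zero
    intro w _
    by_cases hadj : G.Adj w v
    · have hdwv : G.dist w v = 1 := SimpleGraph.dist_eq_one_iff_adj.mpr hadj
      have htri := hconn.dist_triangle (u := u) (v := w) (w := v)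
      have : i < G.dist u w := by omega
      rw [ih u w this, zero_mul]
    · simp [SimpleGraph.adjMatrix_apply, hadj]

private lemma aeval_entry_zero (hconn : G.Connected) (q : Polynomial ℝ) (u v : Fin n)
    (h : q.natDegree < G.dist u v) :
    (Polynomial.aeval (G.adjMatrix ℝ) q) u v = 0 := by
  rw [Polynomial.aeval_eq_sum_range]
  rw [Matrix.sum_apply]
  apply Finset.sum_eq_zero
  intro i hi
  have : i < G.dist u v := by have := Finset.mem_range.mp hi; omega
  rw [Matrix.smul_apply, adjpow_entry_zero hconn i u v this, smul_zero]

private lemma sum_mulVec' {ι : Type*} (s : Finset ι) (f : ι → Matrix (Fin n) (Fin n) ℝ)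
    (v : Fin n → ℝ) : (∑ i ∈ s, f i) *ᵥ v = ∑ i ∈ s, f i *ᵥ v := by
  classical
  induction s using Finset.induction with
  | empty => simp [Matrix.zero_mulVec]
  | insert _ _ hx ih => rw [Finset.sum_insert ‹_›, Finset.sum_insert ‹_›, Matrix.add_mulVec, ih]


private lemma sum_m_eq (htr : ∀ j ≤ d, (E j).trace = m j)
    (hEsum : ∑ j ∈ Finset.range (d + 1), E j = 1) :
    ∑ j ∈ Finset.range (d+1), m j = (n:ℝ) := by
  have h1 : ((∑ j ∈ Finset.range (d+1), E j).trace) = (n:ℝ) := by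
    rw [hEsum, Matrix.trace_one]
    simp
  rw [Matrix.trace_sum] at h1
  rw [← h1]
  exact Finset.sum_congr rfl fun j hj =>
    (htr j (by have := Finset.mem_range.mp hj; omega)).symm

private lemma p0_eq (hn : 0 < n) (hsm : ∑ j ∈ Finset.range (d+1), m j = (n:ℝ))
    (hpdeg : ∀ k ≤ d, (p k).natDegree = k) (hpne : ∀ k ≤ d, p k ≠ 0)
    (hpip0 : pip n d lam m (p 0) (p 0) = (p 0).eval (lam 0)) :
    p 0 = Polynomial.C 1 := by
  have h0 : (p 0).natDegree = 0 := hpdeg 0 (by omega)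
  have hpc : p 0 = Polynomial.C ((p 0).coeff 0) := Polynomial.eq_C_of_natDegree_eq_zero h0
  set a := (p 0).coeff 0 with ha
  have hane : a ≠ 0 := by
    have := Polynomial.leadingCoeff_ne_zero.mpr (hpne 0 (by omega))
    rwa [Polynomial.leadingCoeff, h0] at this
  have heval : ∀ x : ℝ, (p 0).eval x = a := by
    intro x; rw [hpc]; simp
  have hcalc : pip n d lam m (p 0) (p 0) = a * a := by
    unfold pip
    simp only [heval]
    rw [Finset.sum_congr rfl (fun j _ => mul_assoc (m j) a a), ← Finset.sum_mul, hsm]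
    field_simp
  rw [hcalc, heval] at hpip0
  have : a = 1 := by
    have := mul_right_cancel₀ hane (hpip0.trans (one_mul a).symm)
    exact this
  rw [hpc, this]

private lemma pk0_pos (hn : 0 < n) (hlam : StrictAntiOn lam (Set.Iic d))
    (hm : ∀ j ≤ d, 0 < m j)
    (hpdeg : ∀ k ≤ d, (p k).natDegree = k) (hpne : ∀ k ≤ d, p k ≠ 0)
    (hpip : ∀ k ≤ d, ∀ l ≤ d,
      pip n d lam m (p k) (p l) = if k = l then (p k).eval (lam 0) else 0)
    (k : ℕ) (hk : k ≤ d) : 0 < (p k).eval (lam 0) := by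
  have := pip_self_pos hn hlam hm (p k) (by rw [hpdeg k hk]; exact hk) (hpne k hk)
  rwa [hpip k hk k hk, if_pos rfl] at this

private lemma reproducing (hlam : StrictAntiOn lam (Set.Iic d))
    (hpdeg : ∀ k ≤ d, (p k).natDegree = k) (hpne : ∀ k ≤ d, p k ≠ 0)
    (hpip : ∀ k ≤ d, ∀ l ≤ d,
      pip n d lam m (p k) (p l) = if k = l then (p k).eval (lam 0) else 0)
    (q : Polynomial ℝ) (hq : q.natDegree ≤ d) :
    pip n d lam m (∑ k ∈ Finset.range (d+1), p k) q = q.eval (lam 0) := by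
  obtain ⟨c, hc⟩ := span_p hpdeg hpne d le_rfl q hq
  rw [pip_comm, hc, pip_sum_left]
  have hterm : ∀ k ∈ Finset.range (d+1),
      c k * pip n d lam m (p k) (∑ l ∈ Finset.range (d+1), p l)
        = c k * (p k).eval (lam 0) := by
    intro k hk
    have hk' : k ≤ d := by have := Finset.mem_range.mp hk; omega
    congr 1
    rw [pip_comm]
    have hone : (∑ l ∈ Finset.range (d+1), p l) = ∑ l ∈ Finset.range (d+1), (1:ℝ) • p l := by
      simp
    rw [hone, pip_sum_left]
    have hite : ∀ l ∈ Finset.range (d+1),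
        (1:ℝ) * pip n d lam m (p l) (p k) = if l = k then (p k).eval (lam 0) else 0 := by
      intro l hl
      have hl' : l ≤ d := by have := Finset.mem_range.mp hl; omega
      rw [one_mul, hpip l hl' k hk']
      split
      · subst ‹l = k›; rfl
      · rfl
    rw [Finset.sum_congr rfl hite, Finset.sum_ite_eq' (Finset.range (d+1)) k
      (fun _ => (p k).eval (lam 0)), if_pos hk]
  rw [Finset.sum_congr rfl hterm, Polynomial.eval_finset_sum]
  refine Finset.sum_congr rfl fun k _ => ?_
  rw [Polynomial.eval_smul, smul_eq_mul]

private lemma ip_sub_left (M N S : Matrix (Fin n) (Fin n) ℝ) :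
    ip (M - N) S = ip M S - ip N S := by
  unfold ip; rw [Matrix.sub_mul, Matrix.trace_sub]; ring

private lemma ip_self_eq_zero (hn : 0 < n) {M : Matrix (Fin n) (Fin n) ℝ}
    (hsym : Mᵀ = M) (h : ip M M = 0) : M = 0 := by
  have htr0 : (M * M).trace = 0 := by
    unfold ip at h
    rcases mul_eq_zero.mp h with h' | h'
    · exfalso; revert h'; positivity
    · exact h'
  have htr : (M * M).trace = ∑ u, ∑ v, (M u v)^2 := by
    rw [Matrix.trace]
    refine Finset.sum_congr rfl fun u _ => ?_
    rw [Matrix.diag_apply, Matrix.mul_apply]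
    refine Finset.sum_congr rfl fun v _ => ?_
    have hMvu : M v u = M u v :=
      (Matrix.transpose_apply M u v).symm.trans (congrFun (congrFun hsym u) v)
    rw [hMvu, sq]
  rw [htr] at htr0
  have hz := (Finset.sum_eq_zero_iff_of_nonneg
    (fun u _ => Finset.sum_nonneg fun v _ => sq_nonneg (M u v))).mp htr0
  ext u v
  have hz2 := (Finset.sum_eq_zero_iff_of_nonneg
    (fun v _ => sq_nonneg (M u v))).mp (hz u (Finset.mem_univ u)) v (Finset.mem_univ v)
  have := sq_eq_zero_iff.mp hz2
  simpa using this

private lemma ip_J_aeval (hn : 0 < n) (hreg : G.IsRegularOfDegree δ) (q : Polynomial ℝ) :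
    ip (Matrix.of fun _ _ => (1:ℝ)) (Polynomial.aeval (G.adjMatrix ℝ) q) = q.eval (δ:ℝ) := by
  unfold ip
  have htr : ((Matrix.of fun _ _ => (1:ℝ)) * (Polynomial.aeval (G.adjMatrix ℝ) q)).trace
      = (n:ℝ) * q.eval (δ:ℝ) := by
    rw [Matrix.trace]
    have hdiag : ∀ u : Fin n, ((Matrix.of fun _ _ => (1:ℝ))
        * (Polynomial.aeval (G.adjMatrix ℝ) q)).diag u
          = ∑ w, (Polynomial.aeval (G.adjMatrix ℝ) q) w u := by
      intro u
      rw [Matrix.diag_apply, Matrix.mul_apply]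
      refine Finset.sum_congr rfl fun w _ => ?_
      simp
    rw [Finset.sum_congr rfl (fun u _ => hdiag u), Finset.sum_comm]
    have hrow : ∀ w : Fin n, ∑ u, (Polynomial.aeval (G.adjMatrix ℝ) q) w u
        = q.eval (δ:ℝ) := fun w => aeval_rowsum hreg q w
    rw [Finset.sum_congr rfl (fun w _ => hrow w), Finset.sum_const]
    simp [mul_comm]
  rw [htr]
  have : (n:ℝ) ≠ 0 := by positivity
  field_simp

private lemma E_mul_A
    (hEmul : ∀ j ≤ d, ∀ k ≤ d, E j * E k = if j = k then E j else 0)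
    (hAE : G.adjMatrix ℝ = ∑ j ∈ Finset.range (d + 1), lam j • E j)
    (k : ℕ) (hk : k ≤ d) :
    E k * G.adjMatrix ℝ = lam k • E k := by
  rw [hAE, Finset.mul_sum]
  have hite : ∀ j ∈ Finset.range (d+1),
      E k * (lam j • E j) = if k = j then lam j • E j else 0 := by
    intro j hj
    have hj' : j ≤ d := by have := Finset.mem_range.mp hj; omega
    rw [Matrix.mul_smul, hEmul k hk j hj']
    split
    · subst ‹k = j›; rfl
    · rw [smul_zero]
  rw [Finset.sum_congr rfl hite, Finset.sum_ite_eq (Finset.range (d+1)) k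
    (fun j => lam j • E j), if_pos (Finset.mem_range.mpr (by omega))]

private lemma A_mul_E
    (hEmul : ∀ j ≤ d, ∀ k ≤ d, E j * E k = if j = k then E j else 0)
    (hAE : G.adjMatrix ℝ = ∑ j ∈ Finset.range (d + 1), lam j • E j)
    (k : ℕ) (hk : k ≤ d) :
    G.adjMatrix ℝ * E k = lam k • E k := by
  rw [hAE, Finset.sum_mul]
  have hite : ∀ j ∈ Finset.range (d+1),
      (lam j • E j) * E k = if j = k then lam j • E j else 0 := by
    intro j hj
    have hj' : j ≤ d := by have := Finset.mem_range.mp hj; omega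
    rw [Matrix.smul_mul, hEmul j hj' k hk]
    split
    · subst ‹j = k›; rfl
    · rw [smul_zero]
  rw [Finset.sum_congr rfl hite, Finset.sum_ite_eq' (Finset.range (d+1)) k
    (fun j => lam j • E j), if_pos (Finset.mem_range.mpr (by omega))]

private lemma E0_eq (hn : 0 < n) (hconn : G.Connected) (hreg : G.IsRegularOfDegree δ)
    (hlam : StrictAntiOn lam (Set.Iic d)) (hlam0 : lam 0 = (δ:ℝ))
    (hEsym : ∀ j ≤ d, (E j)ᵀ = E j)
    (hEmul : ∀ j ≤ d, ∀ k ≤ d, E j * E k = if j = k then E j else 0)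
    (hEsum : ∑ j ∈ Finset.range (d + 1), E j = 1)
    (hAE : G.adjMatrix ℝ = ∑ j ∈ Finset.range (d + 1), lam j • E j) :
    E 0 = Matrix.of (fun _ _ => (n:ℝ)⁻¹) := by
  have hA1 : G.adjMatrix ℝ *ᵥ Function.const _ (1:ℝ)
      = (δ:ℝ) • Function.const _ (1:ℝ) := by
    funext u
    rw [SimpleGraph.adjMatrix_mulVec_const_apply_of_regular hreg]
    simp [Function.const]
  have hEk1 : ∀ k, 1 ≤ k → k ≤ d → E k *ᵥ Function.const _ (1:ℝ) = 0 := by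
    intro k h1 hk
    have h2 : lam k • (E k *ᵥ Function.const _ (1:ℝ))
        = (δ:ℝ) • (E k *ᵥ Function.const _ (1:ℝ)) := by
      rw [← Matrix.smul_mulVec, ← E_mul_A hEmul hAE k hk,
        ← Matrix.mulVec_mulVec, hA1, Matrix.mulVec_smul]
    have hne : lam k ≠ (δ:ℝ) := by
      rw [← hlam0]
      exact (hlam (Set.mem_Iic.mpr (by omega : (0:ℕ) ≤ d)) (Set.mem_Iic.mpr hk)
        (by omega)).ne
    have hzero : (lam k - (δ:ℝ)) • (E k *ᵥ Function.const _ (1:ℝ)) = 0 := by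
      rw [sub_smul, h2, sub_self]
    rcases smul_eq_zero.mp hzero with h' | h'
    · exact absurd (sub_eq_zero.mp h') hne
    · exact h'
  have hE01 : E 0 *ᵥ Function.const _ (1:ℝ) = Function.const _ (1:ℝ) := by
    have h1 : (∑ j ∈ Finset.range (d+1), E j) *ᵥ Function.const _ (1:ℝ)
        = Function.const _ (1:ℝ) := by rw [hEsum, Matrix.one_mulVec]
    rw [sum_mulVec'] at h1
    have hsingle := Finset.sum_eq_single_of_mem (s := Finset.range (d+1))
      (f := fun j => E j *ᵥ Function.const _ (1:ℝ)) 0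
      (Finset.mem_range.mpr (Nat.succ_pos d))
      (fun j hj hne => hEk1 j (by omega) (by have := Finset.mem_range.mp hj; omega))
    rw [hsingle] at h1
    exact h1
  have hcol : ∀ (w u u' : Fin n), E 0 u w = E 0 u' w := by
    intro w u u'
    have hAE0 : G.adjMatrix ℝ * E 0 = lam 0 • E 0 :=
      A_mul_E hEmul hAE 0 (by omega)
    have hcolv : G.adjMatrix ℝ *ᵥ (fun x => E 0 x w)
        = (δ:ℝ) • (fun x => E 0 x w) := by
      funext x
      have hx : (G.adjMatrix ℝ *ᵥ fun y => E 0 y w) x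
          = (G.adjMatrix ℝ * E 0) x w := by
        rw [Matrix.mul_apply]; rfl
      rw [hx, hAE0]
      simp [hlam0]
    exact perron hconn hreg _ hcolv u u'
  have hsym0 : ∀ (a b : Fin n), E 0 a b = E 0 b a := by
    intro a b
    exact ((Matrix.transpose_apply (E 0) a b).symm.trans
      (congrFun (congrFun (hEsym 0 (by omega)) a) b)).symm
  have hall : ∀ (u v x y : Fin n), E 0 u v = E 0 x y := by
    intro u v x y
    calc E 0 u v = E 0 x v := hcol v u x
      _ = E 0 v x := hsym0 x v
      _ = E 0 y x := hcol x v y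
      _ = E 0 x y := hsym0 y x
  ext u v
  have hrow := congrFun hE01 u
  simp only [Matrix.mulVec, dotProduct, Function.const, mul_one] at hrow
  rw [Finset.sum_congr rfl (fun w _ => hall u w u v)] at hrow
  rw [Finset.sum_const, Finset.card_univ, Fintype.card_fin, nsmul_eq_mul] at hrow
  have hne : (n:ℝ) ≠ 0 := by positivity
  rw [Matrix.of_apply]
  field_simp at hrow ⊢
  linarith [hrow]

private lemma hoffman (hn : 0 < n) (hconn : G.Connected) (hreg : G.IsRegularOfDegree δ)
    (hlam : StrictAntiOn lam (Set.Iic d)) (hlam0 : lam 0 = (δ:ℝ))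
    (hEsym : ∀ j ≤ d, (E j)ᵀ = E j)
    (hEmul : ∀ j ≤ d, ∀ k ≤ d, E j * E k = if j = k then E j else 0)
    (hEsum : ∑ j ∈ Finset.range (d + 1), E j = 1)
    (hAE : G.adjMatrix ℝ = ∑ j ∈ Finset.range (d + 1), lam j • E j)
    (htr : ∀ j ≤ d, (E j).trace = m j)
    (hpdeg : ∀ k ≤ d, (p k).natDegree = k) (hpne : ∀ k ≤ d, p k ≠ 0)
    (hpip : ∀ k ≤ d, ∀ l ≤ d,
      pip n d lam m (p k) (p l) = if k = l then (p k).eval (lam 0) else 0) :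
    Polynomial.aeval (G.adjMatrix ℝ) (∑ k ∈ Finset.range (d+1), p k)
      = Matrix.of (fun _ _ => (1:ℝ)) := by
  classical
  set q0 : Polynomial ℝ := ∏ j ∈ Finset.Icc 1 d, (Polynomial.X - Polynomial.C (lam j))
    with hq0
  have hq0deg : q0.natDegree ≤ d := by
    refine le_trans (Polynomial.natDegree_prod_le _ _) ?_
    have h1 : ∀ j ∈ Finset.Icc 1 d,
        (Polynomial.X - Polynomial.C (lam j)).natDegree = 1 :=
      fun j _ => Polynomial.natDegree_X_sub_C _
    rw [Finset.sum_congr rfl h1, Finset.sum_const, Nat.card_Icc, smul_eq_mul, mul_one]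
    omega
  have hq0eval : ∀ j, 1 ≤ j → j ≤ d → q0.eval (lam j) = 0 := by
    intro j h1 hj
    rw [hq0, Polynomial.eval_prod]
    apply Finset.prod_eq_zero (Finset.mem_Icc.mpr ⟨h1, hj⟩)
    simp
  set z := q0.eval (lam 0) with hz
  have hzne : z ≠ 0 := by
    rw [hz, hq0, Polynomial.eval_prod]
    apply Finset.prod_ne_zero_iff.mpr
    intro j hj
    obtain ⟨h1, hj'⟩ := Finset.mem_Icc.mp hj
    simp only [Polynomial.eval_sub, Polynomial.eval_X, Polynomial.eval_C, sub_ne_zero]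
    exact ((hlam (Set.mem_Iic.mpr (by omega : (0:ℕ) ≤ d)) (Set.mem_Iic.mpr hj')
      (by omega)).ne')
  set l0 := Polynomial.C z⁻¹ * q0 with hl0
  have haevall0 : Polynomial.aeval (G.adjMatrix ℝ) l0 = E 0 := by
    rw [aevalA hEmul hEsum hAE]
    have hite : ∀ j ∈ Finset.range (d+1),
        (l0.eval (lam j)) • E j = if 0 = j then E 0 else 0 := by
      intro j hj
      rcases Nat.eq_zero_or_pos j with rfl | hpos
      · rw [if_pos rfl, hl0]
        simp [← hz, inv_mul_cancel₀ hzne]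
      · rw [if_neg (by omega), hl0]
        simp [hq0eval j hpos (by have := Finset.mem_range.mp hj; omega)]
    rw [Finset.sum_congr rfl hite, Finset.sum_ite_eq (Finset.range (d+1)) 0
      (fun _ => E 0), if_pos (Finset.mem_range.mpr (by omega))]
  have hl0deg : l0.natDegree ≤ d := le_trans (Polynomial.natDegree_C_mul_le _ _) hq0deg
  set H := ∑ k ∈ Finset.range (d+1), p k with hH
  have hHdeg : H.natDegree ≤ d := by
    refine Polynomial.natDegree_sum_le_of_forall_le _ _ fun k hk => ?_
    rw [hpdeg k (by have := Finset.mem_range.mp hk; omega)]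
    have := Finset.mem_range.mp hk; omega
  set r := H - (n:ℝ) • l0 with hr
  have hrdeg : r.natDegree ≤ d := by
    refine le_trans (Polynomial.natDegree_sub_le _ _) (max_le hHdeg ?_)
    exact le_trans (Polynomial.natDegree_smul_le _ _) hl0deg
  set D := Polynomial.aeval (G.adjMatrix ℝ) H - Matrix.of (fun _ _ => (1:ℝ)) with hD
  have hDr : D = Polynomial.aeval (G.adjMatrix ℝ) r := by
    rw [hr, map_sub, _root_.map_smul, haevall0,
      E0_eq hn hconn hreg hlam hlam0 hEsym hEmul hEsum hAE, hD]
    congr 1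
    ext u v
    simp only [Matrix.smul_apply, Matrix.of_apply, smul_eq_mul]
    field_simp
  have hipDD : ip D D = 0 := by
    have h1 : ip (Polynomial.aeval (G.adjMatrix ℝ) H) D = r.eval (lam 0) := by
      rw [hDr, ip_aeval hEmul hEsum hAE htr]
      exact reproducing hlam hpdeg hpne hpip r hrdeg
    have h2 : ip (Matrix.of (fun _ _ => (1:ℝ))) D = r.eval (lam 0) := by
      rw [hDr, ip_J_aeval hn hreg, hlam0]
    rw [hD, ip_sub_left, ← hD, h1, h2, sub_self]
  have hDsym : Dᵀ = D := by rw [hDr]; exact aeval_symm r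
  have := ip_self_eq_zero hn hDsym hipDD
  rw [hD] at this
  rw [sub_eq_zero] at this
  exact this


private lemma pip_congr_left {q q' : Polynomial ℝ} (r : Polynomial ℝ)
    (h : ∀ j ≤ d, q.eval (lam j) = q'.eval (lam j)) :
    pip n d lam m q r = pip n d lam m q' r := by
  unfold pip
  congr 1
  refine Finset.sum_congr rfl fun j hj => ?_
  rw [h j (by have := Finset.mem_range.mp hj; omega)]

private lemma pip_add_left (q1 q2 r : Polynomial ℝ) :
    pip n d lam m (q1 + q2) r = pip n d lam m q1 r + pip n d lam m q2 r := by
  unfold pip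
  rw [← mul_add, ← Finset.sum_add_distrib]
  congr 1
  refine Finset.sum_congr rfl fun j _ => ?_
  rw [Polynomial.eval_add]; ring

private lemma pip_smul_left (a : ℝ) (q r : Polynomial ℝ) :
    pip n d lam m (a • q) r = a * pip n d lam m q r := by
  unfold pip
  rw [Finset.mul_sum, Finset.mul_sum, Finset.mul_sum]
  refine Finset.sum_congr rfl fun j _ => ?_
  rw [Polynomial.eval_smul, smul_eq_mul]; ring

private lemma pip_lower
    (hpdeg : ∀ k ≤ d, (p k).natDegree = k) (hpne : ∀ k ≤ d, p k ≠ 0)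
    (hpip : ∀ k ≤ d, ∀ l ≤ d,
      pip n d lam m (p k) (p l) = if k = l then (p k).eval (lam 0) else 0)
    (l : ℕ) (hl : l ≤ d) (r : Polynomial ℝ) (hr : r.natDegree < l) :
    pip n d lam m r (p l) = 0 := by
  obtain ⟨c, hc⟩ := span_p hpdeg hpne (l-1) (by omega) r (by omega)
  rw [hc, pip_sum_left]
  apply Finset.sum_eq_zero
  intro j hj
  have hj' : j ≤ l - 1 := by have := Finset.mem_range.mp hj; omega
  rw [hpip j (by omega) l hl, if_neg (by omega), mul_zero]

private lemma coeff_from_pip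
    (hpip : ∀ k ≤ d, ∀ l ≤ d,
      pip n d lam m (p k) (p l) = if k = l then (p k).eval (lam 0) else 0)
    (c : ℕ → ℝ) (l : ℕ) (hl : l ≤ d) :
    pip n d lam m (∑ j ∈ Finset.range (d+1), c j • p j) (p l)
      = c l * (p l).eval (lam 0) := by
  rw [pip_sum_left]
  have hite : ∀ j ∈ Finset.range (d+1),
      c j * pip n d lam m (p j) (p l)
        = if j = l then c l * (p l).eval (lam 0) else 0 := by
    intro j hj
    have hj' : j ≤ d := by have := Finset.mem_range.mp hj; omega
    rw [hpip j hj' l hl]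
    split
    · subst ‹j = l›; rfl
    · rw [mul_zero]
  rw [Finset.sum_congr rfl hite, Finset.sum_ite_eq' (Finset.range (d+1)) l
    (fun _ => c l * (p l).eval (lam 0)), if_pos (Finset.mem_range.mpr (by omega))]

private lemma aeval_congr_spec
    (hEmul : ∀ j ≤ d, ∀ k ≤ d, E j * E k = if j = k then E j else 0)
    (hEsum : ∑ j ∈ Finset.range (d + 1), E j = 1)
    (hAE : G.adjMatrix ℝ = ∑ j ∈ Finset.range (d + 1), lam j • E j)
    {q r : Polynomial ℝ} (h : ∀ j ≤ d, q.eval (lam j) = r.eval (lam j)) :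
    Polynomial.aeval (G.adjMatrix ℝ) q = Polynomial.aeval (G.adjMatrix ℝ) r := by
  rw [aevalA hEmul hEsum hAE, aevalA hEmul hEsum hAE]
  exact Finset.sum_congr rfl fun j hj =>
    by rw [h j (by have := Finset.mem_range.mp hj; omega)]

private lemma three_term (hn : 0 < n) (hlam : StrictAntiOn lam (Set.Iic d))
    (hm : ∀ j ≤ d, 0 < m j)
    (hEmul : ∀ j ≤ d, ∀ k ≤ d, E j * E k = if j = k then E j else 0)
    (hEsum : ∑ j ∈ Finset.range (d + 1), E j = 1)
    (hAE : G.adjMatrix ℝ = ∑ j ∈ Finset.range (d + 1), lam j • E j)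
    (hpdeg : ∀ k ≤ d, (p k).natDegree = k) (hpne : ∀ k ≤ d, p k ≠ 0)
    (hpip : ∀ k ≤ d, ∀ l ≤ d,
      pip n d lam m (p k) (p l) = if k = l then (p k).eval (lam 0) else 0)
    (k : ℕ) (hk : k + 1 ≤ d) :
    ∃ a b cc : ℝ, a ≠ 0 ∧
      G.adjMatrix ℝ * Polynomial.aeval (G.adjMatrix ℝ) (p (k+1))
        = a • Polynomial.aeval (G.adjMatrix ℝ) (p k)
          + b • Polynomial.aeval (G.adjMatrix ℝ) (p (k+1))
          + cc • Polynomial.aeval (G.adjMatrix ℝ) (p (k+2))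
        ∧ (d < k + 2 → cc = 0) := by
  classical
  set w : Polynomial ℝ := Polynomial.X * p (k+1) with hw
  have hwdeg : w.natDegree = k + 2 := by
    rw [hw, Polynomial.natDegree_mul Polynomial.X_ne_zero (hpne (k+1) hk),
      Polynomial.natDegree_X, hpdeg (k+1) hk]
    omega
  obtain ⟨q, hqdeg, hqev⟩ := interp_deg hlam w
  have haq : Polynomial.aeval (G.adjMatrix ℝ) q = Polynomial.aeval (G.adjMatrix ℝ) w :=
    aeval_congr_spec hEmul hEsum hAE hqev
  obtain ⟨c, hc⟩ := span_p hpdeg hpne d le_rfl q hqdeg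
  -- identify coefficients
  have hcl : ∀ l ≤ d, c l * (p l).eval (lam 0) = pip n d lam m w (p l) := by
    intro l hl
    rw [← coeff_from_pip hpip c l hl, ← hc]
    exact pip_congr_left (p l) hqev
  have hpos : ∀ l ≤ d, 0 < (p l).eval (lam 0) :=
    pk0_pos hn hlam hm hpdeg hpne hpip
  -- vanishing for l < k
  have hvlow : ∀ l, l < k → l ≤ d → c l = 0 := by
    intro l hlk hl
    have h1 : pip n d lam m w (p l) = pip n d lam m (p (k+1)) (Polynomial.X * p l) := by
      rw [hw]; exact pip_X (p (k+1)) (p l)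
    have h2 : pip n d lam m (Polynomial.X * p l) (p (k+1)) = 0 := by
      apply pip_lower hpdeg hpne hpip (k+1) hk
      have : (Polynomial.X * p l).natDegree = l + 1 := by
        rw [Polynomial.natDegree_mul Polynomial.X_ne_zero (hpne l hl),
          Polynomial.natDegree_X, hpdeg l hl]
        omega
      omega
    have := hcl l hl
    rw [h1, pip_comm, h2] at this
    exact (mul_eq_zero.mp this).resolve_right (hpos l hl).ne'
  -- vanishing for l > k+2
  have hvhigh : ∀ l, k + 2 < l → l ≤ d → c l = 0 := by
    intro l hlk hl
    have h2 : pip n d lam m w (p l) = 0 :=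
      pip_lower hpdeg hpne hpip l hl w (by omega)
    have := hcl l hl
    rw [h2] at this
    exact (mul_eq_zero.mp this).resolve_right (hpos l hl).ne'
  -- a = c k nonzero
  have hane : c k ≠ 0 := by
    set ρ := (p k).leadingCoeff / (p (k+1)).leadingCoeff with hρ
    have hlead1 : (p k).leadingCoeff ≠ 0 := Polynomial.leadingCoeff_ne_zero.mpr (hpne k (by omega))
    have hlead2 : (p (k+1)).leadingCoeff ≠ 0 := Polynomial.leadingCoeff_ne_zero.mpr (hpne (k+1) hk)
    have hρne : ρ ≠ 0 := div_ne_zero hlead1 hlead2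
    have hrem : (Polynomial.X * p k - ρ • p (k+1)).natDegree ≤ k := by
      rw [Polynomial.natDegree_le_iff_coeff_eq_zero]
      intro N hN
      rw [Polynomial.coeff_sub, Polynomial.coeff_smul, smul_eq_mul]
      have hXc : (Polynomial.X * p k).coeff N = (p k).coeff (N - 1) := by
        cases N with
        | zero => omega
        | succ N' => simp [Polynomial.coeff_X_mul]
      rw [hXc]
      rcases Nat.lt_or_ge (k+1) N with h | h
      · rw [Polynomial.coeff_eq_zero_of_natDegree_lt (by rw [hpdeg k (by omega)]; omega),
          Polynomial.coeff_eq_zero_of_natDegree_lt (by rw [hpdeg (k+1) hk]; omega)]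
        ring
      · have hNk : N = k + 1 := by omega
        subst hNk
        simp only [Nat.add_sub_cancel]
        have e1 : (p k).coeff k = (p k).leadingCoeff := by
          rw [Polynomial.leadingCoeff, hpdeg k (by omega)]
        have e2 : (p (k+1)).coeff (k+1) = (p (k+1)).leadingCoeff := by
          rw [Polynomial.leadingCoeff, hpdeg (k+1) hk]
        rw [e1, e2, hρ, div_mul_cancel₀ _ hlead2, sub_self]
    have hsplit : pip n d lam m (Polynomial.X * p k) (p (k+1))
        = ρ * (p (k+1)).eval (lam 0) := by
      have hdecomp : Polynomial.X * p k
          = ρ • p (k+1) + (Polynomial.X * p k - ρ • p (k+1)) := by ring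
      rw [hdecomp, pip_add_left, pip_smul_left, hpip (k+1) hk (k+1) hk, if_pos rfl,
        pip_lower hpdeg hpne hpip (k+1) hk _ (by omega), add_zero]
    have hck : c k * (p k).eval (lam 0) = ρ * (p (k+1)).eval (lam 0) := by
      rw [hcl k (by omega), hw, pip_X, ← hsplit, pip_comm]
    intro hc0
    rw [hc0, zero_mul] at hck
    exact hρne (by
      have := hck.symm
      rcases mul_eq_zero.mp this with h' | h'
      · exact h'
      · exact absurd h' (hpos (k+1) hk).ne')
  -- assemble
  refine ⟨c k, c (k+1), if k + 2 ≤ d then c (k+2) else 0, hane, ?_, ?_⟩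
  · have hAP : G.adjMatrix ℝ * Polynomial.aeval (G.adjMatrix ℝ) (p (k+1))
        = Polynomial.aeval (G.adjMatrix ℝ) w := by
      rw [hw, _root_.map_mul, Polynomial.aeval_X]
    rw [hAP, ← haq, hc, map_sum]
    have hterm : ∀ j ∈ Finset.range (d+1),
        Polynomial.aeval (G.adjMatrix ℝ) (c j • p j)
          = (if j = k then c k else 0) • Polynomial.aeval (G.adjMatrix ℝ) (p j)
            + (if j = k+1 then c (k+1) else 0) • Polynomial.aeval (G.adjMatrix ℝ) (p j)
            + (if j = k+2 then c (k+2) else 0) • Polynomial.aeval (G.adjMatrix ℝ) (p j) := by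
      intro j hj
      have hj' : j ≤ d := by have := Finset.mem_range.mp hj; omega
      rw [_root_.map_smul]
      by_cases h1 : j = k
      · subst h1; rw [if_pos rfl, if_neg (by omega), if_neg (by omega)]; simp
      by_cases h2 : j = k+1
      · subst h2; rw [if_neg (by omega), if_pos rfl, if_neg (by omega)]; simp
      by_cases h3 : j = k+2
      · subst h3; rw [if_neg (by omega), if_neg (by omega), if_pos rfl]; simp
      · rcases Nat.lt_or_ge j k with h | h
        · rw [hvlow j h hj', if_neg h1, if_neg h2, if_neg h3]; simp
        · have : k + 2 < j := by omega
          rw [hvhigh j this hj', if_neg h1, if_neg h2, if_neg h3]; simp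
    rw [Finset.sum_congr rfl hterm, Finset.sum_add_distrib, Finset.sum_add_distrib]
    have collapse : ∀ (t : ℕ) (a : ℝ), (∑ j ∈ Finset.range (d+1),
        (if j = t then a else 0) • Polynomial.aeval (G.adjMatrix ℝ) (p j))
          = if t ∈ Finset.range (d+1)
              then a • Polynomial.aeval (G.adjMatrix ℝ) (p t) else 0 := by
      intro t a
      have h1 : ∀ j ∈ Finset.range (d+1),
          (if j = t then a else 0) • Polynomial.aeval (G.adjMatrix ℝ) (p j)
            = if j = t then a • Polynomial.aeval (G.adjMatrix ℝ) (p j) else 0 := by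
        intro j _; split <;> simp
      rw [Finset.sum_congr rfl h1, Finset.sum_ite_eq' (Finset.range (d+1)) t
        (fun j => a • Polynomial.aeval (G.adjMatrix ℝ) (p j))]
    rw [collapse k (c k), collapse (k+1) (c (k+1)), collapse (k+2) (c (k+2)),
      if_pos (Finset.mem_range.mpr (by omega : k < d + 1)),
      if_pos (Finset.mem_range.mpr (by omega : k + 1 < d + 1))]
    by_cases hk2 : k + 2 ≤ d
    · rw [if_pos (Finset.mem_range.mpr (by omega : k + 2 < d + 1)), if_pos hk2]
    · rw [if_neg (by rw [Finset.mem_range]; omega), if_neg hk2, zero_smul]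
  · intro hgt
    rw [if_neg (by omega)]


private lemma A_distM_entry (hconn : G.Connected) (j : ℕ) (u v : Fin n)
    (h : G.dist u v + 1 < j) :
    (G.adjMatrix ℝ * distMatrix G j) u v = 0 := by
  rw [Matrix.mul_apply]
  apply Finset.sum_eq_zero
  intro w _
  by_cases hadj : G.Adj u w
  · have h1 : G.dist w u = 1 := SimpleGraph.dist_eq_one_iff_adj.mpr hadj.symm
    have htri := hconn.dist_triangle (u := w) (v := u) (w := v)
    have : G.dist w v ≠ j := by omega
    simp [distMatrix, this]
  · simp [hadj]

omit [DecidableRel G.Adj] in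
private lemma const_of_adj (hconn : G.Connected) (f : Fin n → ℝ)
    (h : ∀ u v, G.Adj u v → f u = f v) : ∀ u v, f u = f v := by
  have walk : ∀ (x y : Fin n) (W : G.Walk x y), f x = f y := by
    intro x y W
    induction W with
    | nil => rfl
    | cons hadj W ih => exact (h _ _ hadj).trans ih
  intro u v
  obtain ⟨W⟩ := hconn.preconnected u v
  exact walk u v W

end SET

/-- Harmonic mean version of the spectral excess theorem: a regular graph with `D = d` is
distance-regular iff `s_{d-1}(λ0) = n / Σ_u |N_{d-1}(u)|⁻¹`. -/
theorem spectral_excess_theorem_harmonic_mean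
    {n d : ℕ} (hn : 0 < n) (G : SimpleGraph (Fin n)) [DecidableRel G.Adj]
    (hconn : G.Connected) (δ : ℕ) (hreg : G.IsRegularOfDegree δ)
    (hdiam : G.diam = d) (hd : 1 ≤ d)
    (lam : ℕ → ℝ) (hlam : StrictAntiOn lam (Set.Iic d)) (hlam0 : lam 0 = (δ : ℝ))
    (m : ℕ → ℝ) (hm : ∀ j ≤ d, 0 < m j)
    (E : ℕ → Matrix (Fin n) (Fin n) ℝ)
    (hEsym : ∀ j ≤ d, (E j)ᵀ = E j)
    (hEmul : ∀ j ≤ d, ∀ k ≤ d, E j * E k = if j = k then E j else 0)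
    (hEsum : ∑ j ∈ Finset.range (d + 1), E j = 1)
    (hAE : G.adjMatrix ℝ = ∑ j ∈ Finset.range (d + 1), lam j • E j)
    (htr : ∀ j ≤ d, (E j).trace = m j)
    (p : ℕ → Polynomial ℝ) (hpdeg : ∀ k ≤ d, (p k).natDegree = k) (hpne : ∀ k ≤ d, p k ≠ 0)
    (horth : ∀ k ≤ d, ∀ l ≤ d,
      (1 / (n : ℝ)) * ∑ t ∈ Finset.range (d + 1),
          m t * (p k).eval (lam t) * (p l).eval (lam t)
        = if k = l then (p k).eval (lam 0) else 0) :
    (∀ i ≤ d, Polynomial.aeval (G.adjMatrix ℝ) (p i) = distMatrix G i) ↔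
      (∑ k ∈ Finset.range d, p k).eval (lam 0)
        = (n : ℝ) / ∑ u : Fin n,
            ((Finset.univ.filter fun v => G.dist u v ≤ d - 1).card : ℝ)⁻¹ := by
  classical
  have hpip : ∀ k ≤ d, ∀ l ≤ d,
      pip n d lam m (p k) (p l) = if k = l then (p k).eval (lam 0) else 0 :=
    fun k hk l hl => horth k hk l hl
  have hsm := sum_m_eq htr hEsum
  have hp0 : p 0 = Polynomial.C 1 := by
    apply p0_eq hn hsm hpdeg hpne
    have := hpip 0 (by omega) 0 (by omega)
    rwa [if_pos rfl] at this
  have hpos : ∀ k ≤ d, 0 < (p k).eval (lam 0) := pk0_pos hn hlam hm hpdeg hpne hpip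
  have hdle : ∀ u v : Fin n, G.dist u v ≤ d := by
    intro u v
    rw [← hdiam]
    exact SimpleGraph.dist_le_diam
      (SimpleGraph.ediam_ne_top_of_diam_ne_zero (by omega))
  set s : Polynomial ℝ := ∑ k ∈ Finset.range d, p k with hs
  set σ : ℝ := s.eval (lam 0) with hσ
  have hσeval : σ = ∑ k ∈ Finset.range d, (p k).eval (lam 0) := by
    rw [hσ, hs, Polynomial.eval_finset_sum]
  have hσpos : 0 < σ := by
    rw [hσeval]
    apply Finset.sum_pos (fun k hk => hpos k (by have := Finset.mem_range.mp hk; omega))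
    exact ⟨0, Finset.mem_range.mpr (by omega)⟩
  have hsdeg : s.natDegree ≤ d - 1 := by
    rw [hs]
    refine Polynomial.natDegree_sum_le_of_forall_le _ _ fun k hk => ?_
    rw [hpdeg k (by have := Finset.mem_range.mp hk; omega)]
    have := Finset.mem_range.mp hk; omega
  have hcard : ∀ u : Fin n, ((Finset.univ.filter fun v => G.dist u v ≤ d - 1).card : ℝ)
      = ∑ v : Fin n, ∑ k ∈ Finset.range d, (if G.dist u v = k then (1:ℝ) else 0) := by
    intro u
    rw [Finset.card_filter]
    push_cast
    refine Finset.sum_congr rfl fun v _ => ?_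
    rw [Finset.sum_ite_eq (Finset.range d) (G.dist u v) (fun _ => (1:ℝ))]
    exact if_congr (by rw [Finset.mem_range]; omega) rfl rfl
  constructor
  · intro hDR
    have hrow : ∀ u : Fin n,
        ((Finset.univ.filter fun v => G.dist u v ≤ d - 1).card : ℝ) = σ := by
      intro u
      rw [hcard u, Finset.sum_comm, hσeval]
      refine Finset.sum_congr rfl fun k hk => ?_
      have hk' : k ≤ d := by have := Finset.mem_range.mp hk; omega
      have h1 : ∑ v, (if G.dist u v = k then (1:ℝ) else 0)
          = ∑ v, (Polynomial.aeval (G.adjMatrix ℝ) (p k)) u v := by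
        rw [hDR k hk']
        rfl
      rw [h1, aeval_rowsum hreg, ← hlam0]
    rw [Finset.sum_congr rfl (fun u _ => by rw [hrow u]), Finset.sum_const,
      Finset.card_univ, Fintype.card_fin, nsmul_eq_mul]
    rw [eq_div_iff (by positivity)]
    field_simp
  · intro hHM
    set M := Polynomial.aeval (G.adjMatrix ℝ) s with hM
    have hMsym : Mᵀ = M := aeval_symm s
    have hMsymm : ∀ u v : Fin n, M u v = M v u := fun u v =>
      ((Matrix.transpose_apply M v u).symm.trans (congrFun (congrFun hMsym v) u))
    have hMsupp : ∀ u v : Fin n, d - 1 < G.dist u v → M u v = 0 := by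
      intro u v h
      exact aeval_entry_zero hconn s u v (by omega)
    have hMrow : ∀ u : Fin n, ∑ v, M u v = σ := by
      intro u
      rw [hM, aeval_rowsum hreg, hσ, hlam0]
    set N : Fin n → Finset (Fin n) :=
      fun u => Finset.univ.filter fun v => G.dist u v ≤ d - 1 with hN
    have hbpos : ∀ u : Fin n, 0 < ((N u).card : ℝ) := by
      intro u
      have hu : u ∈ N u := by
        rw [hN]
        simp [SimpleGraph.dist_self]
      exact_mod_cast Finset.card_pos.mpr ⟨u, hu⟩
    have hColInN : ∀ u : Fin n, ∑ v ∈ N u, M v u = σ := by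
      intro u
      have hfull : ∑ v, M v u = σ :=
        calc ∑ v, M v u = ∑ v, M u v := Finset.sum_congr rfl fun v _ => hMsymm v u
          _ = σ := hMrow u
      rw [← hfull]
      refine Finset.sum_subset (Finset.subset_univ _) ?_
      intro v _ hv
      have hdv : d - 1 < G.dist u v := by
        rw [hN] at hv
        simp only [Finset.mem_filter, Finset.mem_univ, true_and, not_le] at hv
        omega
      rw [hMsymm v u]
      exact hMsupp u v hdv
    have hCol2InN : ∀ u : Fin n, ∑ v ∈ N u, (M v u)^2 = ∑ v, (M v u)^2 := by
      intro u
      refine Finset.sum_subset (Finset.subset_univ _) ?_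
      intro v _ hv
      have hdv : d - 1 < G.dist u v := by
        rw [hN] at hv
        simp only [Finset.mem_filter, Finset.mem_univ, true_and, not_le] at hv
        omega
      rw [hMsymm v u, hMsupp u v hdv]
      ring
    have hpipss : pip n d lam m s s = σ := by
      have hone : s = ∑ k ∈ Finset.range d, (1:ℝ) • p k := by rw [hs]; simp
      rw [hone, pip_sum_left, hσeval]
      refine Finset.sum_congr rfl fun k hk => ?_
      have hk' : k ≤ d := by have := Finset.mem_range.mp hk; omega
      rw [one_mul, pip_comm, pip_sum_left]
      have hite : ∀ l ∈ Finset.range d,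
          (1:ℝ) * pip n d lam m (p l) (p k) = if l = k then (p k).eval (lam 0) else 0 := by
        intro l hl
        have hl' : l ≤ d := by have := Finset.mem_range.mp hl; omega
        rw [one_mul, hpip l hl' k hk']
        split
        · subst ‹l = k›; rfl
        · rfl
      rw [Finset.sum_congr rfl hite, Finset.sum_ite_eq' (Finset.range d) k
        (fun _ => (p k).eval (lam 0)), if_pos hk]
    have htrM : ∑ u, ∑ v, (M v u)^2 = (n:ℝ) * σ := by
      have h1 : ip M M = σ := by rw [hM, ip_aeval hEmul hEsum hAE htr, hpipss]
      have h2 : (M * M).trace = ∑ u, ∑ v, (M v u)^2 := by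
        rw [Matrix.trace]
        refine Finset.sum_congr rfl fun u _ => ?_
        rw [Matrix.diag_apply, Matrix.mul_apply]
        refine Finset.sum_congr rfl fun v _ => ?_
        rw [hMsymm u v, sq]
      unfold ip at h1
      rw [h2] at h1
      have hnne : (n:ℝ) ≠ 0 := by positivity
      field_simp at h1
      linarith
    have hT : ∑ u : Fin n, ((N u).card : ℝ)⁻¹ = (n:ℝ) / σ := by
      have hTpos : 0 < ∑ u : Fin n, ((N u).card : ℝ)⁻¹ :=
        Finset.sum_pos (fun u _ => inv_pos.mpr (hbpos u))
          ⟨⟨0, hn⟩, Finset.mem_univ _⟩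
      have hsame : (∑ u : Fin n, ((N u).card : ℝ)⁻¹)
          = ∑ u : Fin n,
            ((Finset.univ.filter fun v => G.dist u v ≤ d - 1).card : ℝ)⁻¹ := rfl
      have hmul : σ * (∑ u : Fin n, ((N u).card : ℝ)⁻¹) = (n:ℝ) := by
        rw [hsame, hHM]
        rw [← hsame]
        rw [div_mul_cancel₀ _ hTpos.ne']
      rw [eq_div_iff hσpos.ne']
      linarith [hmul]
    have hkey : ∑ u : Fin n, ∑ v ∈ N u, (M v u - σ / ((N u).card : ℝ))^2 = 0 := by
      have hexp : ∀ u : Fin n, ∑ v ∈ N u, (M v u - σ / ((N u).card:ℝ))^2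
          = (∑ v, (M v u)^2) - σ^2 / ((N u).card:ℝ) := by
        intro u
        have hc : ((N u).card : ℝ) ≠ 0 := (hbpos u).ne'
        have e1 : ∀ v ∈ N u, (M v u - σ/((N u).card:ℝ))^2
            = ((M v u)^2 - 2*(σ/((N u).card:ℝ))*(M v u)) + (σ/((N u).card:ℝ))^2 :=
          fun v _ => by ring
        rw [Finset.sum_congr rfl e1, Finset.sum_add_distrib, Finset.sum_sub_distrib,
          hCol2InN u, ← Finset.mul_sum, hColInN u, Finset.sum_const, nsmul_eq_mul]
        field_simp
        ring
      rw [Finset.sum_congr rfl (fun u _ => hexp u), Finset.sum_sub_distrib, htrM]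
      have hsub : ∑ u : Fin n, σ^2 / ((N u).card:ℝ) = σ^2 * ((n:ℝ)/σ) := by
        rw [← hT, Finset.mul_sum]
        refine Finset.sum_congr rfl fun u _ => ?_
        rw [div_eq_mul_inv]
      rw [hsub]
      field_simp
      ring
    have hzero : ∀ u : Fin n, ∀ v ∈ N u, M v u = σ / ((N u).card:ℝ) := by
      intro u v hv
      have h1 := (Finset.sum_eq_zero_iff_of_nonneg
        (fun u _ => Finset.sum_nonneg fun v _ => sq_nonneg _)).mp hkey u (Finset.mem_univ u)
      have h2 := (Finset.sum_eq_zero_iff_of_nonneg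
        (fun v _ => sq_nonneg _)).mp h1 v hv
      have h3 := sq_eq_zero_iff.mp h2
      linarith [sub_eq_zero.mp h3]
    have hbconst : ∀ u v : Fin n, ((N u).card : ℝ) = ((N v).card : ℝ) := by
      rcases Nat.lt_or_ge d 2 with hd1 | hd2
      · have hd1' : d = 1 := by omega
        have hNu : ∀ u : Fin n, N u = {u} := by
          intro u
          rw [hN]
          ext v
          simp only [Finset.mem_filter, Finset.mem_univ, true_and, Finset.mem_singleton,
            hd1']
          rw [Nat.le_zero]
          rw [hconn.dist_eq_zero_iff]
          exact eq_comm
        intro u v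
        rw [hNu u, hNu v]
        simp
      · apply const_of_adj hconn
        intro u v hadj
        have hduv : G.dist u v = 1 := SimpleGraph.dist_eq_one_iff_adj.mpr hadj
        have hdvu : G.dist v u = 1 := by rw [SimpleGraph.dist_comm]; exact hduv
        have hvNu : v ∈ N u := by
          rw [hN]; simp only [Finset.mem_filter, Finset.mem_univ, true_and]; omega
        have huNv : u ∈ N v := by
          rw [hN]; simp only [Finset.mem_filter, Finset.mem_univ, true_and]; omega
        have e1 : M v u = σ / ((N u).card:ℝ) := hzero u v hvNu
        have e2 : M u v = σ / ((N v).card:ℝ) := hzero v u huNv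
        have e3 : σ / ((N u).card:ℝ) = σ / ((N v).card:ℝ) := by
          rw [← e1, ← e2, hMsymm v u]
        have h4 := (div_eq_div_iff (hbpos u).ne' (hbpos v).ne').mp e3
        exact mul_left_cancel₀ hσpos.ne' (by linarith)
    have hbval : ∀ u : Fin n, ((N u).card : ℝ) = σ := by
      intro u
      have hTc : ∑ v : Fin n, ((N v).card:ℝ)⁻¹ = (n:ℝ) * ((N u).card:ℝ)⁻¹ := by
        rw [Finset.sum_congr rfl (fun v _ => by rw [hbconst v u]), Finset.sum_const,
          Finset.card_univ, Fintype.card_fin, nsmul_eq_mul]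
      rw [hTc] at hT
      have hbne := (hbpos u).ne'
      have hnne : (n:ℝ) ≠ 0 := by positivity
      field_simp at hT
      linarith
    have hMval : ∀ u v : Fin n, M u v = if G.dist u v ≤ d - 1 then 1 else 0 := by
      intro u v
      by_cases h : G.dist u v ≤ d - 1
      · rw [if_pos h]
        have hvN : v ∈ N u := by
          rw [hN]; simp only [Finset.mem_filter, Finset.mem_univ, true_and]; exact h
        have hz := hzero u v hvN
        rw [hbval u] at hz
        rw [hMsymm u v, hz, div_self hσpos.ne']
      · rw [if_neg h]
        exact hMsupp u v (by omega)
    have hball : M = ballMatrix G (d-1) := by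
      ext u v
      rw [hMval u v]
      rfl
    have hJ := hoffman hn hconn hreg hlam hlam0 hEsym hEmul hEsum hAE htr hpdeg hpne hpip
    have hpd : Polynomial.aeval (G.adjMatrix ℝ) (p d) = distMatrix G d := by
      have h1 : Polynomial.aeval (G.adjMatrix ℝ) (p d)
          = Matrix.of (fun _ _ => (1:ℝ)) - M := by
        rw [← hJ, Finset.sum_range_succ, map_add, ← hs, ← hM]
        abel
      rw [h1, hball]
      ext u v
      simp only [Matrix.sub_apply, Matrix.of_apply, ballMatrix, distMatrix]
      by_cases h : G.dist u v ≤ d - 1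
      · rw [if_pos h, if_neg (by omega)]
        ring
      · rw [if_neg h, if_pos (by have := hdle u v; omega)]
        ring
    have hstep : ∀ i : ℕ, i + 1 ≤ d - 1 →
        (Polynomial.aeval (G.adjMatrix ℝ) (∑ k ∈ Finset.range (i+2), p k)
          = ballMatrix G (i+1)) →
        (∀ j, i + 1 < j → j ≤ d →
          Polynomial.aeval (G.adjMatrix ℝ) (p j) = distMatrix G j) →
        (Polynomial.aeval (G.adjMatrix ℝ) (p (i+1)) = distMatrix G (i+1)) ∧
        (Polynomial.aeval (G.adjMatrix ℝ) (∑ k ∈ Finset.range (i+1), p k)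
          = ballMatrix G i) := by
      intro i hi hballi hdist
      obtain ⟨a, bb, cc, hane, heq, hcc⟩ :=
        three_term hn hlam hm hEmul hEsum hAE hpdeg hpne hpip (i+1) (by omega)
      have hPi2 : Polynomial.aeval (G.adjMatrix ℝ) (p (i+2)) = distMatrix G (i+2) :=
        hdist (i+2) (by omega) (by omega)
      have hlow : ∀ u v : Fin n, G.dist u v < i+1 →
          (Polynomial.aeval (G.adjMatrix ℝ) (p (i+1))) u v = 0 := by
        intro u v hduv
        have hentry := congrFun (congrFun heq u) v
        simp only [Matrix.add_apply, Matrix.smul_apply, smul_eq_mul] at hentry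
        have e1 : (G.adjMatrix ℝ * Polynomial.aeval (G.adjMatrix ℝ) (p (i+2))) u v = 0 := by
          rw [hPi2]
          exact A_distM_entry hconn (i+2) u v (by omega)
        have e2 : (Polynomial.aeval (G.adjMatrix ℝ) (p (i+2))) u v = 0 := by
          rw [hPi2]
          have : G.dist u v ≠ i + 2 := by omega
          simp [distMatrix, this]
        have e3 : cc * (Polynomial.aeval (G.adjMatrix ℝ) (p (i+3))) u v = 0 := by
          rcases le_or_gt (i+3) d with h3 | h3
          · rw [hdist (i+3) (by omega) h3]
            have : G.dist u v ≠ i + 3 := by omega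
            simp [distMatrix, this]
          · rw [hcc (by omega), zero_mul]
        rw [e1, e2, e3] at hentry
        have : a * (Polynomial.aeval (G.adjMatrix ℝ) (p (i+1))) u v = 0 := by linarith
        exact (mul_eq_zero.mp this).resolve_left hane
      have hmid : ∀ u v : Fin n, G.dist u v = i+1 →
          (Polynomial.aeval (G.adjMatrix ℝ) (p (i+1))) u v = 1 := by
        intro u v hduv
        have h1 := congrFun (congrFun hballi u) v
        rw [Finset.sum_range_succ, map_add] at h1
        have h2 : (Polynomial.aeval (G.adjMatrix ℝ) (∑ k ∈ Finset.range (i+1), p k)) u v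
            = 0 := by
          apply aeval_entry_zero hconn
          have hdegs : (∑ k ∈ Finset.range (i+1), p k).natDegree ≤ i := by
            refine Polynomial.natDegree_sum_le_of_forall_le _ _ fun k hk => ?_
            rw [hpdeg k (by have := Finset.mem_range.mp hk; omega)]
            have := Finset.mem_range.mp hk; omega
          omega
        have h3 : (ballMatrix G (i+1)) u v = 1 := by
          simp [ballMatrix, hduv]
        rw [h3] at h1
        simp only [Matrix.add_apply] at h1
        rw [h2] at h1
        linarith
      have hPi1 : Polynomial.aeval (G.adjMatrix ℝ) (p (i+1)) = distMatrix G (i+1) := by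
        ext u v
        rcases lt_trichotomy (G.dist u v) (i+1) with h | h | h
        · rw [hlow u v h]
          have : G.dist u v ≠ i + 1 := by omega
          simp [distMatrix, this]
        · rw [hmid u v h]
          simp [distMatrix, h]
        · rw [aeval_entry_zero hconn _ u v (by rw [hpdeg (i+1) (by omega)]; omega)]
          have : G.dist u v ≠ i + 1 := by omega
          simp [distMatrix, this]
      refine ⟨hPi1, ?_⟩
      have hsplit : Polynomial.aeval (G.adjMatrix ℝ) (∑ k ∈ Finset.range (i+1), p k)
          = ballMatrix G (i+1) - distMatrix G (i+1) := by
        rw [← hballi,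
          show (∑ k ∈ Finset.range (i+2), p k) = (∑ k ∈ Finset.range (i+1), p k) + p (i+1)
            from Finset.sum_range_succ p (i+1), map_add, hPi1]
        abel
      rw [hsplit]
      ext u v
      simp only [Matrix.sub_apply, ballMatrix, distMatrix, Matrix.of_apply]
      by_cases h : G.dist u v ≤ i
      · rw [if_pos (by omega : G.dist u v ≤ i + 1), if_neg (by omega), if_pos h]
        ring
      · by_cases h2 : G.dist u v = i + 1
        · rw [if_pos (by omega), if_pos h2, if_neg h]
          ring
        · rw [if_neg (by omega), if_neg h2, if_neg h]
          ring
    have hdown : ∀ t : ℕ, ∀ i : ℕ, i + t = d - 1 →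
        (Polynomial.aeval (G.adjMatrix ℝ) (∑ k ∈ Finset.range (i+1), p k)
          = ballMatrix G i) ∧
        (∀ j, i < j → j ≤ d →
          Polynomial.aeval (G.adjMatrix ℝ) (p j) = distMatrix G j) := by
      intro t
      induction t with
      | zero =>
        intro i hi
        have hid : i = d - 1 := by omega
        subst hid
        constructor
        · have hrw : d - 1 + 1 = d := by omega
          rw [hrw]
          exact hball
        · intro j hj hjd
          have hjde : j = d := by omega
          subst hjde
          exact hpd
      | succ t ih =>
        intro i hi
        have h1 := ih (i+1) (by omega)
        have h2 := hstep i (by omega) h1.1 h1.2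
        refine ⟨h2.2, ?_⟩
        intro j hj hjd
        rcases Nat.eq_or_lt_of_le (Nat.succ_le_of_lt hj) with hje | hjl
        · rw [← hje]
          exact h2.1
        · exact h1.2 j hjl hjd
    intro i hi
    rcases Nat.eq_zero_or_pos i with rfl | hipos
    · rw [hp0]
      ext u v
      rw [Polynomial.aeval_C, _root_.map_one]
      by_cases h : u = v
      · subst h
        simp [distMatrix, Matrix.one_apply_eq, SimpleGraph.dist_self]
      · have hne0 : G.dist u v ≠ 0 := fun hc => h ((hconn.dist_eq_zero_iff).mp hc)
        rw [Matrix.one_apply_ne h]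
        have hd0 : distMatrix G 0 u v = 0 := by
          simp only [distMatrix, Matrix.of_apply]
          exact if_neg hne0
        rw [hd0]
    · exact (hdown (d-1) 0 (by omega)).2 i (by omega) hi
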